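/- Let p be an odd prime, and P, Q integers with D = P^2 - 4Q such that D is a quadratic nonresidue modulo p (i.e., the Legendre symbol (D/p) = -1). Then U_{p+1} ≡ 0 (mod p), where U is the Lucas sequence with parameters P, Q. -/

import Mathlib

def lucasU (P Q : ℤ) : ℕ → ℤ
  | 0 => 0
  | 1 => 1
  | k + 2 => P * lucasU P Q (k + 1) - Q * lucasU P Q k

def lucasV (P Q : ℤ) : ℕ → ℤ
  | 0 => 2
  | 1 => P
  | k + 2 => P * lucasV P Q (k + 1) - Q * lucasV P Q k

theorem stmt_3 (p : ℕ) (hp : p.Prime) (hodd : Odd p) [Fact p.Prime] (P Q : ℤ)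
    (hD : legendreSym p (P ^ 2 - 4 * Q) = -1) :
    (p : ℤ) ∣ lucasU P Q (p + 1) := by
  set D : ℤ := P ^ 2 - 4 * Q with hDdef
  haveI : CharP (AlgebraicClosure (ZMod p)) p := charP_of_injective_algebraMap
    (algebraMap (ZMod p) (AlgebraicClosure (ZMod p))).injective p
  have hp2 : ¬ ((p : ℤ) ∣ 2) := by
    intro h
    have h' : p ∣ 2 := by exact_mod_cast h
    have hpe := (Nat.prime_dvd_prime_iff_eq hp Nat.prime_two).mp h'
    obtain ⟨m, hm⟩ := hodd
    omega
  have h2 : (2 : (AlgebraicClosure (ZMod p))) ≠ 0 := by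
    have : ((2 : ℤ) : (AlgebraicClosure (ZMod p))) ≠ 0 := by
      rw [Ne, CharP.intCast_eq_zero_iff (AlgebraicClosure (ZMod p)) p]; exact hp2
    simpa using this
  have hDK : ((D : ℤ) : (AlgebraicClosure (ZMod p))) ≠ 0 := by
    rw [Ne, CharP.intCast_eq_zero_iff (AlgebraicClosure (ZMod p)) p]
    intro h
    have : ((D : ℤ) : ZMod p) = 0 := by
      rwa [ZMod.intCast_zmod_eq_zero_iff_dvd]
    rw [(legendreSym.eq_zero_iff p D).mpr this] at hD
    norm_num at hD
  obtain ⟨s, hs⟩ := IsAlgClosed.exists_pow_nat_eq (k := AlgebraicClosure (ZMod p)) ((D : ℤ) : (AlgebraicClosure (ZMod p))) zero_lt_two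
  set α : (AlgebraicClosure (ZMod p)) := ((P : (AlgebraicClosure (ZMod p))) + s) / 2 with hα
  set β : (AlgebraicClosure (ZMod p)) := ((P : (AlgebraicClosure (ZMod p))) - s) / 2 with hβ
  have hsum : α + β = (P : (AlgebraicClosure (ZMod p))) := by rw [hα, hβ]; field_simp; ring
  have hdiff : α - β = s := by rw [hα, hβ]; field_simp; ring
  have hs2 : s ^ 2 = (P : (AlgebraicClosure (ZMod p))) ^ 2 - 4 * (Q : (AlgebraicClosure (ZMod p))) := by
    rw [hs, hDdef]; push_cast; ring
  have hprod : α * β = (Q : (AlgebraicClosure (ZMod p))) := by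
    rw [hα, hβ]; field_simp; linear_combination -hs2
  have hne : α ≠ β := by
    intro h
    apply hDK
    rw [← hs, ← hdiff, h, sub_self]
    ring
  have heuler : ((D : ℤ) : (AlgebraicClosure (ZMod p))) ^ (p / 2) = -1 := by
    have h1 : ((D : ℤ) : ZMod p) ^ (p / 2) = -1 := by
      have h := (legendreSym.eq_pow p D).symm
      rw [hD] at h; push_cast at h; exact h
    calc ((D : ℤ) : (AlgebraicClosure (ZMod p))) ^ (p / 2)
        = algebraMap (ZMod p) (AlgebraicClosure (ZMod p)) (((D : ℤ) : ZMod p) ^ (p / 2)) := by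
          rw [map_pow, map_intCast]
      _ = -1 := by rw [h1, map_neg, map_one]
  have hroot : α ^ 2 - (P : (AlgebraicClosure (ZMod p))) * α + (Q : (AlgebraicClosure (ZMod p))) = 0 := by
    have h : α ^ 2 - (α + β) * α + α * β = 0 := by ring
    rwa [hsum, hprod] at h
  have hrootβ : β ^ 2 - (P : (AlgebraicClosure (ZMod p))) * β + (Q : (AlgebraicClosure (ZMod p))) = 0 := by
    have h : β ^ 2 - (α + β) * β + α * β = 0 := by ring
    rwa [hsum, hprod] at h
  have hrootp : (α ^ p) ^ 2 - (P : (AlgebraicClosure (ZMod p))) * (α ^ p) + (Q : (AlgebraicClosure (ZMod p))) = 0 := by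
    have h := congrArg (frobenius (AlgebraicClosure (ZMod p)) p) hroot
    simp only [map_add, map_sub, map_mul, map_pow, map_intCast, map_zero,
      frobenius_def] at h
    exact h
  have hcases : α ^ p = α ∨ α ^ p = β := by
    have h : (α ^ p - α) * (α ^ p - β) = 0 := by
      have e : (α ^ p - α) * (α ^ p - β)
          = (α ^ p) ^ 2 - (α + β) * (α ^ p) + α * β := by ring
      rw [e, hsum, hprod, hrootp]
    rcases mul_eq_zero.mp h with h | h
    · left; linear_combination h
    · right; linear_combination h
  have hodd' : p = 2 * (p / 2) + 1 := by
    obtain ⟨m, hm⟩ := hodd; omega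
  have habp : (α - β) ^ p = -(α - β) := by
    have e : (α - β) ^ p = ((α - β) ^ 2) ^ (p / 2) * (α - β) := by
      rw [← pow_mul, ← pow_succ, ← hodd']
    rw [e, hdiff, hs, heuler]
    ring
  have hPa : (P : (AlgebraicClosure (ZMod p))) - α = β := by
    rw [hα, hβ]; field_simp; ring
  have hβp : β ^ p = (P : (AlgebraicClosure (ZMod p))) - α ^ p := by
    rw [← hPa, sub_pow_char]
    congr 1
    have := map_intCast (frobenius (AlgebraicClosure (ZMod p)) p) P
    rwa [frobenius_def] at this
  have hαp : α ^ p = β := by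
    rcases hcases with h | h
    · exfalso
      have hb : β ^ p = β := by
        rw [hβp, h, ← hsum]; ring
      have heq : α - β = -(α - β) := by
        rw [← habp, sub_pow_char, h, hb]
      have h2' : (2 : (AlgebraicClosure (ZMod p))) * (α - β) = 0 := by linear_combination heq
      rcases mul_eq_zero.mp h2' with h' | h'
      · exact h2 h'
      · exact hne (sub_eq_zero.mp h')
    · exact h
  have hβp' : β ^ p = α := by rw [hβp, hαp, ← hsum]; ring
  have hαQ : α ^ (p + 1) = (Q : (AlgebraicClosure (ZMod p))) := by rw [pow_succ, hαp, mul_comm, hprod]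
  have hβQ : β ^ (p + 1) = (Q : (AlgebraicClosure (ZMod p))) := by rw [pow_succ, hβp', hprod]
  have hU : ∀ k, ((lucasU P Q k : ℤ) : (AlgebraicClosure (ZMod p))) * (α - β) = α ^ k - β ^ k := by
    intro k
    induction k using Nat.twoStepInduction with
    | zero => simp [lucasU]
    | one => simp [lucasU]
    | more n ih1 ih2 =>
      show ((lucasU P Q (n + 2) : ℤ) : (AlgebraicClosure (ZMod p))) * (α - β) = α ^ (n + 2) - β ^ (n + 2)
      rw [lucasU]
      push_cast
      have e1 : α ^ (n + 2) = ((P : (AlgebraicClosure (ZMod p))) * α - (Q : (AlgebraicClosure (ZMod p)))) * α ^ n := by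
        rw [show (P : (AlgebraicClosure (ZMod p))) * α - (Q : (AlgebraicClosure (ZMod p))) = α ^ 2 from by linear_combination -hroot]
        ring
      have e2 : β ^ (n + 2) = ((P : (AlgebraicClosure (ZMod p))) * β - (Q : (AlgebraicClosure (ZMod p)))) * β ^ n := by
        rw [show (P : (AlgebraicClosure (ZMod p))) * β - (Q : (AlgebraicClosure (ZMod p))) = β ^ 2 from by linear_combination -hrootβ]
        ring
      rw [e1, e2]
      linear_combination (P : (AlgebraicClosure (ZMod p))) * ih2 - (Q : (AlgebraicClosure (ZMod p))) * ih1
  have hfinal : ((lucasU P Q (p + 1) : ℤ) : (AlgebraicClosure (ZMod p))) = 0 := by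
    have h := hU (p + 1)
    rw [hαQ, hβQ, sub_self] at h
    rcases mul_eq_zero.mp h with h | h
    · exact h
    · exact absurd (sub_eq_zero.mp h) hne
  rwa [CharP.intCast_eq_zero_iff (AlgebraicClosure (ZMod p)) p] at hfinal
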